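/- arXiv:1808.02251 — 3 statements merged into one kernel-verified Lean document; each statement's English description precedes it below -/
import Mathlib

section
/- If c^λ_{μν} are the coefficients in the expansion g_{λ/μ} = Σ_ν c^λ_{μν} g_ν of a skew dual stable Grothendieck polynomial in the g-basis, then Σ_ν c^λ_{μν} = 1 for all μ ⊆ λ. -/
/- Common combinatorial definitions: partitions (as weakly decreasing, eventually
zero functions ℕ → ℕ), skew shapes, cells, and reverse plane partitions. -/

open scoped Classical

noncomputable section

/-- `f : ℕ → ℕ` is a partition: weakly decreasing and eventually zero. -/
def IsPartition (f : ℕ → ℕ) : Prop :=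
  (∀ ⦃i j : ℕ⦄, i ≤ j → f j ≤ f i) ∧ ∃ N, ∀ n, N ≤ n → f n = 0

/-- the empty partition -/
def zeroPart : ℕ → ℕ := fun _ => 0

/-- containment of Young diagrams: `μ ⊆ λ`. -/
def SubShape (μ lam : ℕ → ℕ) : Prop := ∀ i, μ i ≤ lam i

/-- `(i, j)` is a cell (row `i`, column `j`, 0-indexed) of the skew shape `λ/μ`. -/
def Cell (μ lam : ℕ → ℕ) (i j : ℕ) : Prop := μ i ≤ j ∧ j < lam i

/-- A reverse plane partition of shape `λ/μ`: entries are positive integers on the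
cells of `λ/μ` (recorded as `0` off the shape), weakly increasing along each row and
each column. -/
def IsRPP (μ lam : ℕ → ℕ) (T : ℕ → ℕ → ℕ) : Prop :=
  (∀ i j, Cell μ lam i j → 1 ≤ T i j) ∧
  (∀ i j, ¬ Cell μ lam i j → T i j = 0) ∧
  (∀ i j, Cell μ lam i j → Cell μ lam i (j + 1) → T i j ≤ T i (j + 1)) ∧
  (∀ i j, Cell μ lam i j → Cell μ lam (i + 1) j → T i j ≤ T (i + 1) j)

variable (K : Type*) [CommRing K]

/-- number of columns of the reverse plane partition `T` (of shape `λ/μ`) containing `k`. -/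
def colCount (μ lam : ℕ → ℕ) (T : ℕ → ℕ → ℕ) (k : ℕ) : ℕ :=
  Set.ncard {j : ℕ | ∃ i, Cell μ lam i j ∧ T i j = k}

/-- `c(λ/μ)`: the number of nonempty columns of the skew shape `λ/μ`. -/
def nCols (μ lam : ℕ → ℕ) : ℕ := Set.ncard {j : ℕ | ∃ i, Cell μ lam i j}

/-- `|λ/μ|`: the number of boxes of the skew shape `λ/μ`. -/
def skewSize (μ lam : ℕ → ℕ) : ℕ := ∑ᶠ i : ℕ, (lam i - μ i)

/-- The dual stable Grothendieck polynomial `g_{λ/μ} = Σ_T x^T`, as a formal power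
series in the variables `x_0, x_1, x_2, …`: the coefficient of the monomial `x^d`
is the number of reverse plane partitions `T` of shape `λ/μ` such that, for every
`k`, the number of columns of `T` containing the entry `k + 1` is `d k`. -/
def gP (μ lam : ℕ → ℕ) : MvPowerSeries ℕ K :=
  fun d => (Nat.card {T : ℕ → ℕ → ℕ //
    IsRPP μ lam T ∧ ∀ k : ℕ, colCount μ lam T (k + 1) = d k} : K)

lemma cols_finite_aux (μ lam : ℕ → ℕ) (hlam : ∀ ⦃i j : ℕ⦄, i ≤ j → lam j ≤ lam i)
    (S : Set ℕ) (hS : ∀ j ∈ S, ∃ i, Cell μ lam i j) : S.Finite := by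
  apply Set.Finite.subset (Set.finite_Iio (lam 0))
  intro j hj
  obtain ⟨i, hi⟩ := hS j hj
  exact lt_of_lt_of_le hi.2 (hlam (Nat.zero_le i))

lemma gP_single (μ lam : ℕ → ℕ) (hlam : IsPartition lam) (m : ℕ) :
    gP K μ lam (Finsupp.single 0 m) = if m = nCols μ lam then 1 else 0 := by
  classical
  set T0 : ℕ → ℕ → ℕ := fun i j => if Cell μ lam i j then 1 else 0 with hT0
  have hT0rpp : IsRPP μ lam T0 := by
    refine ⟨fun i j h => by simp [T0, h], fun i j h => by simp [T0, h],
      fun i j h h' => by simp [T0, h, h'], fun i j h h' => by simp [T0, h, h']⟩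
  have hcolsT0 : colCount μ lam T0 1 = nCols μ lam := by
    unfold colCount nCols
    congr 1
    ext j
    constructor
    · rintro ⟨i, hc, _⟩; exact ⟨i, hc⟩
    · rintro ⟨i, hc⟩; exact ⟨i, hc, by simp [T0, hc]⟩
  have hcolsT0' : ∀ k, 1 ≤ k → colCount μ lam T0 (k + 1) = 0 := by
    intro k hk
    unfold colCount
    convert Set.ncard_empty ℕ using 2
    ext j
    simp only [Set.mem_setOf_eq, Set.mem_empty_iff_false, iff_false, not_exists]
    rintro i ⟨hc, hT⟩
    simp only [T0, if_pos hc] at hT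
    omega
  have hmem : ∀ T, (IsRPP μ lam T ∧ ∀ k, colCount μ lam T (k + 1) = Finsupp.single 0 m k) →
      T = T0 ∧ m = nCols μ lam := by
    rintro T ⟨hrpp, hcol⟩
    have hone : ∀ i j, Cell μ lam i j → T i j = 1 := by
      intro i j hc
      by_contra hne
      have h1 : 1 ≤ T i j := hrpp.1 i j hc
      have h2 : 2 ≤ T i j := by omega
      set k := T i j - 1 with hk
      have hk1 : 1 ≤ k := by omega
      have hsk : Finsupp.single (0 : ℕ) m k = 0 := by
        rw [Finsupp.single_apply, if_neg (by omega)]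
      have hfin : {j' : ℕ | ∃ i', Cell μ lam i' j' ∧ T i' j' = k + 1}.Finite :=
        cols_finite_aux μ lam hlam.1 _ (fun j' hj' => ⟨hj'.choose, hj'.choose_spec.1⟩)
      have hne' : {j' : ℕ | ∃ i', Cell μ lam i' j' ∧ T i' j' = k + 1}.Nonempty :=
        ⟨j, i, hc, by omega⟩
      have hpos : colCount μ lam T (k + 1) ≠ 0 := by
        unfold colCount
        exact ((Set.ncard_pos hfin).mpr hne').ne'
      exact hpos (by rw [hcol k, hsk])
    have hTeq : T = T0 := by
      funext i j
      by_cases hc : Cell μ lam i j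
      · simp [T0, hc, hone i j hc]
      · simp [T0, hc, hrpp.2.1 i j hc]
    refine ⟨hTeq, ?_⟩
    have h0 := hcol 0
    rw [Finsupp.single_apply, if_pos rfl] at h0
    rw [← h0, hTeq, hcolsT0]
  by_cases hm : m = nCols μ lam
  · rw [if_pos hm]
    have hT0mem : IsRPP μ lam T0 ∧
        ∀ k, colCount μ lam T0 (k + 1) = Finsupp.single 0 m k := by
      refine ⟨hT0rpp, fun k => ?_⟩
      rcases Nat.eq_zero_or_pos k with hk | hk
      · subst hk
        rw [Finsupp.single_apply, if_pos rfl, hcolsT0, hm]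
      · rw [hcolsT0' k hk, Finsupp.single_apply, if_neg (by omega)]
    haveI : Unique {T : ℕ → ℕ → ℕ //
        IsRPP μ lam T ∧ ∀ k, colCount μ lam T (k + 1) = Finsupp.single 0 m k} :=
      ⟨⟨⟨T0, hT0mem⟩⟩, fun x => Subtype.ext (hmem x x.2).1⟩
    simp [gP, Nat.card_unique]
  · rw [if_neg hm]
    haveI : IsEmpty {T : ℕ → ℕ → ℕ //
        IsRPP μ lam T ∧ ∀ k, colCount μ lam T (k + 1) = Finsupp.single 0 m k} :=
      ⟨fun x => hm (hmem x x.2).2⟩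
    simp [gP, Nat.card_of_isEmpty]

lemma nCols_zeroPart (ν : ℕ → ℕ) (hν : ∀ ⦃i j : ℕ⦄, i ≤ j → ν j ≤ ν i) :
    nCols zeroPart ν = ν 0 := by
  unfold nCols
  have h : {j : ℕ | ∃ i, Cell zeroPart ν i j} = ↑(Finset.range (ν 0)) := by
    ext j
    simp only [Set.mem_setOf_eq, Finset.coe_range, Set.mem_Iio]
    constructor
    · rintro ⟨i, _, h2⟩; exact lt_of_lt_of_le h2 (hν (Nat.zero_le i))
    · intro h; exact ⟨0, Nat.zero_le j, h⟩
  rw [h, Set.ncard_coe_finset, Finset.card_range]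

/-- If `c^λ_{μν}` are the coefficients in the expansion
`g_{λ/μ} = Σ_ν c^λ_{μν} g_ν`, then `Σ_ν c^λ_{μν} = 1`. -/
theorem sum_skew_expansion_coefficients (μ lam : ℕ → ℕ)
    (hμ : IsPartition μ) (hlam : IsPartition lam) (hsub : SubShape μ lam)
    (c : (ℕ → ℕ) → K)
    (hfin : (Function.support c).Finite)
    (hpart : ∀ ν, c ν ≠ 0 → IsPartition ν)
    (hexp : gP K μ lam = ∑ᶠ ν : ℕ → ℕ, c ν • gP K zeroPart ν) :
    (∑ᶠ ν : ℕ → ℕ, c ν) = 1 := by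
  classical
  set F := hfin.toFinset with hF
  set M := max (nCols μ lam + 1) (F.sup fun ν => ν 0 + 1) with hM
  have hsum : (∑ᶠ ν : ℕ → ℕ, c ν • gP K zeroPart ν)
      = ∑ ν ∈ F, c ν • gP K zeroPart ν := by
    apply finsum_eq_sum_of_support_subset
    intro ν hν
    simp only [hF, Set.Finite.coe_toFinset, Function.mem_support]
    intro hc
    apply hν
    simp [hc]
  have key : ∀ m : ℕ, gP K μ lam (Finsupp.single 0 m)
      = ∑ ν ∈ F, c ν * gP K zeroPart ν (Finsupp.single 0 m) := by
    intro m
    have h1 := congrArg (MvPowerSeries.coeff (R := K) (Finsupp.single 0 m)) hexp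
    rw [hsum, map_sum] at h1
    simp only [map_smul, smul_eq_mul] at h1
    exact h1
  have lhs1 : ∑ m ∈ Finset.range M, gP K μ lam (Finsupp.single 0 m) = 1 := by
    have : ∀ m ∈ Finset.range M, gP K μ lam (Finsupp.single 0 m)
        = if m = nCols μ lam then (1 : K) else 0 := fun m _ => gP_single K μ lam hlam m
    rw [Finset.sum_congr rfl this, Finset.sum_ite_eq' (Finset.range M) (nCols μ lam)
      (fun _ => (1 : K)), if_pos]
    simp only [Finset.mem_range, hM]
    exact lt_of_lt_of_le (Nat.lt_succ_self _) (le_max_left _ _)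
  have rhs1 : ∑ m ∈ Finset.range M, ∑ ν ∈ F, c ν * gP K zeroPart ν (Finsupp.single 0 m)
      = ∑ ν ∈ F, c ν := by
    rw [Finset.sum_comm]
    apply Finset.sum_congr rfl
    intro ν hν
    have hcν : c ν ≠ 0 := by simpa [hF] using hν
    have hνp : IsPartition ν := hpart ν hcν
    have hnc : nCols zeroPart ν = ν 0 := nCols_zeroPart ν hνp.1
    have hlt : nCols zeroPart ν < M := by
      rw [hnc, hM]
      have h1 := Finset.le_sup (f := fun ν : ℕ → ℕ => ν 0 + 1) hν
      exact lt_of_lt_of_le (Nat.lt_succ_self _) (le_trans h1 (le_max_right _ _))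
    calc ∑ m ∈ Finset.range M, c ν * gP K zeroPart ν (Finsupp.single 0 m)
        = ∑ m ∈ Finset.range M, c ν * if m = nCols zeroPart ν then 1 else 0 := by
          apply Finset.sum_congr rfl
          intro m _
          rw [gP_single K zeroPart ν hνp m]
      _ = c ν := by
          simp only [mul_ite, mul_one, mul_zero]
          rw [Finset.sum_ite_eq' (Finset.range M) (nCols zeroPart ν) (fun _ => c ν),
            if_pos (Finset.mem_range.mpr hlt)]
  have : (1 : K) = ∑ ν ∈ F, c ν := by
    rw [← lhs1, ← rhs1]
    exact Finset.sum_congr rfl (fun m _ => key m)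
  rw [finsum_eq_sum c hfin, ← this]
end
end

section
/- More generally, if d^λ_{μν} are the structure constants of g_μ g_ν = Σ_λ d^λ_{μν} g_λ, then for every t, t^{c(μ)+c(ν)} = Σ_λ d^λ_{μν} t^{c(λ)}, where c(λ) denotes the number of columns of λ (i.e., λ₁). -/
/- Common combinatorial definitions: partitions (as weakly decreasing, eventually
zero functions ℕ → ℕ), skew shapes, cells, and reverse plane partitions. -/

open scoped Classical

noncomputable section

variable (K : Type*) [CommRing K]

-- AUX

lemma cell_zeroPart (lam : ℕ → ℕ) (i j : ℕ) : Cell zeroPart lam i j ↔ j < lam i := by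
  simp [Cell, zeroPart]

lemma entry_one {lam : ℕ → ℕ} (hlam : IsPartition lam) {T : ℕ → ℕ → ℕ}
    (hT : IsRPP zeroPart lam T) (h2 : ∀ m : ℕ, colCount zeroPart lam T (m + 2) = 0)
    {i j : ℕ} (hc : Cell zeroPart lam i j) : T i j = 1 := by
  have h1 : 1 ≤ T i j := hT.1 i j hc
  by_contra hne
  have h2le : 2 ≤ T i j := by omega
  obtain ⟨m, hm⟩ : ∃ m, T i j = m + 2 := ⟨T i j - 2, by omega⟩
  have hfin : ({j' : ℕ | ∃ i', Cell zeroPart lam i' j' ∧ T i' j' = m + 2}).Finite := by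
    apply (Set.finite_Iio (lam 0)).subset
    rintro j' ⟨i', hc', -⟩
    exact lt_of_lt_of_le ((cell_zeroPart lam i' j').1 hc') (hlam.1 (Nat.zero_le i'))
  have hpos : 0 < colCount zeroPart lam T (m + 2) :=
    (Set.ncard_pos hfin).2 ⟨j, i, hc, hm⟩
  rw [h2 m] at hpos; exact absurd hpos (lt_irrefl 0)

lemma colset_eq {lam : ℕ → ℕ} (hlam : IsPartition lam) :
    {j : ℕ | ∃ i, Cell zeroPart lam i j} = Set.Iio (lam 0) := by
  ext j
  constructor
  · rintro ⟨i, hc⟩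
    exact lt_of_lt_of_le ((cell_zeroPart lam i j).1 hc) (hlam.1 (Nat.zero_le i))
  · intro hj
    exact ⟨0, (cell_zeroPart lam 0 j).2 hj⟩

/-- the all-ones filling -/
def T₀ (lam : ℕ → ℕ) : ℕ → ℕ → ℕ := fun i j => if Cell zeroPart lam i j then 1 else 0

lemma T₀_spec {lam : ℕ → ℕ} (hlam : IsPartition lam) :
    IsRPP zeroPart lam (T₀ lam) ∧
      (colCount zeroPart lam (T₀ lam) 1 = lam 0 ∧
       ∀ m : ℕ, colCount zeroPart lam (T₀ lam) (m + 2) = 0) := by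
  refine ⟨⟨fun i j hc => by simp [T₀, hc], fun i j hc => by simp [T₀, hc],
      fun i j hc hc' => by simp [T₀, hc, hc'], fun i j hc hc' => by simp [T₀, hc, hc']⟩, ?_, ?_⟩
  · have : {j : ℕ | ∃ i, Cell zeroPart lam i j ∧ T₀ lam i j = 1}
        = {j : ℕ | ∃ i, Cell zeroPart lam i j} := by
      ext j; constructor
      · rintro ⟨i, hc, -⟩; exact ⟨i, hc⟩
      · rintro ⟨i, hc⟩; exact ⟨i, hc, by simp [T₀, hc]⟩
    rw [colCount, this, colset_eq hlam, ← Finset.coe_range, Set.ncard_coe_finset,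
      Finset.card_range]
  · intro m
    have : {j : ℕ | ∃ i, Cell zeroPart lam i j ∧ T₀ lam i j = m + 2} = ∅ := by
      ext j; simp only [Set.mem_setOf_eq, Set.mem_empty_iff_false, iff_false]
      rintro ⟨i, hc, habs⟩
      simp [T₀, hc] at habs
    rw [colCount, this, Set.ncard_empty]

lemma coeff_gP {lam : ℕ → ℕ} (hlam : IsPartition lam) (e : ℕ →₀ ℕ)
    (he : ∀ k : ℕ, e (k + 1) = 0) :
    MvPowerSeries.coeff (R := K) e (gP K zeroPart lam) = if e 0 = lam 0 then 1 else 0 := by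
  rw [MvPowerSeries.coeff_apply, gP]
  have huniq : ∀ T : ℕ → ℕ → ℕ,
      (IsRPP zeroPart lam T ∧ ∀ k : ℕ, colCount zeroPart lam T (k + 1) = e k) →
      T = T₀ lam ∧ e 0 = lam 0 := by
    intro T ⟨hT, hcc⟩
    have h2 : ∀ m : ℕ, colCount zeroPart lam T (m + 2) = 0 := by
      intro m; rw [hcc (m + 1), he m]
    have hTeq : T = T₀ lam := by
      funext i j
      by_cases hc : Cell zeroPart lam i j
      · rw [entry_one hlam hT h2 hc]; simp [T₀, hc]
      · rw [hT.2.1 i j hc]; simp [T₀, hc]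
    refine ⟨hTeq, ?_⟩
    have := hcc 0
    rw [hTeq] at this
    rw [← this, (T₀_spec hlam).2.1]
  by_cases h : e 0 = lam 0
  · rw [if_pos h]
    have : Nat.card {T : ℕ → ℕ → ℕ //
        IsRPP zeroPart lam T ∧ ∀ k : ℕ, colCount zeroPart lam T (k + 1) = e k} = 1 := by
      rw [Nat.card_eq_one_iff_unique]
      constructor
      · constructor
        intro a b
        exact Subtype.ext ((huniq a a.2).1.trans (huniq b b.2).1.symm)
      · refine ⟨⟨T₀ lam, (T₀_spec hlam).1, ?_⟩⟩
        intro k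
        cases k with
        | zero => rw [(T₀_spec hlam).2.1, h]
        | succ m => rw [(T₀_spec hlam).2.2 m, he m]
    rw [this, Nat.cast_one]
  · rw [if_neg h]
    have : IsEmpty {T : ℕ → ℕ → ℕ //
        IsRPP zeroPart lam T ∧ ∀ k : ℕ, colCount zeroPart lam T (k + 1) = e k} := by
      constructor
      rintro ⟨T, hT⟩
      exact h (huniq T hT).2
    rw [Nat.card_of_isEmpty, Nat.cast_zero]


/-- If `d^λ_{μν}` are the structure constants of
`g_μ g_ν = Σ_λ d^λ_{μν} g_λ`, then for every `t`,
`t^{c(μ)+c(ν)} = Σ_λ d^λ_{μν} t^{c(λ)}`, where `c(λ) = λ₁` is the number of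
columns of `λ`. -/
theorem sum_structure_constants_columns (μ ν : ℕ → ℕ)
    (hμ : IsPartition μ) (hν : IsPartition ν)
    (d : (ℕ → ℕ) → K)
    (hfin : (Function.support d).Finite)
    (hpart : ∀ lam, d lam ≠ 0 → IsPartition lam)
    (hexp : gP K zeroPart μ * gP K zeroPart ν =
      ∑ᶠ lam : ℕ → ℕ, d lam • gP K zeroPart lam) :
    ∀ t : K, t ^ (μ 0 + ν 0) = ∑ᶠ lam : ℕ → ℕ, d lam * t ^ (lam 0) := by
  intro t
  set S : Finset (ℕ → ℕ) := hfin.toFinset with hS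
  have hmemS : ∀ lam, lam ∈ S ↔ d lam ≠ 0 := by
    intro lam; rw [hS, Set.Finite.mem_toFinset, Function.mem_support]
  have hsum : (∑ᶠ lam : ℕ → ℕ, d lam • gP K zeroPart lam)
      = ∑ lam ∈ S, d lam • gP K zeroPart lam := by
    apply finsum_eq_sum_of_support_subset
    intro lam hlam
    rw [Function.mem_support] at hlam
    rw [Finset.mem_coe, hmemS]
    intro hd
    exact hlam (by rw [hd, zero_smul])
  -- key coefficient identity
  have key : ∀ n : ℕ, (if n = μ 0 + ν 0 then (1 : K) else 0)
      = ∑ lam ∈ S, d lam * (if n = lam 0 then 1 else 0) := by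
    intro n
    have hc := congrArg (MvPowerSeries.coeff (R := K) (Finsupp.single 0 n)) hexp
    rw [MvPowerSeries.coeff_mul, hsum, map_sum] at hc
    have hrhs : ∀ lam ∈ S, MvPowerSeries.coeff (R := K) (Finsupp.single 0 n)
        (d lam • gP K zeroPart lam) = d lam * (if n = lam 0 then 1 else 0) := by
      intro lam hlam
      rw [hmemS] at hlam
      rw [LinearMap.map_smul, smul_eq_mul,
        coeff_gP K (hpart lam hlam) _ (fun k => by simp [Finsupp.single_apply])]
      simp only [Finsupp.single_eq_same]
    rw [Finset.sum_congr rfl hrhs] at hc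
    rw [← hc]
    have hterm : ∀ p ∈ Finset.HasAntidiagonal.antidiagonal (Finsupp.single (0 : ℕ) n),
        MvPowerSeries.coeff (R := K) p.1 (gP K zeroPart μ) *
          MvPowerSeries.coeff (R := K) p.2 (gP K zeroPart ν)
        = (if p.1 0 = μ 0 then (1 : K) else 0) * (if p.2 0 = ν 0 then 1 else 0) := by
      intro p hp
      rw [Finset.HasAntidiagonal.mem_antidiagonal] at hp
      have h1 : ∀ k : ℕ, p.1 (k + 1) = 0 := by
        intro k
        have := DFunLike.congr_fun hp (k + 1)
        simp [Finsupp.single_apply] at this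
        omega
      have h2 : ∀ k : ℕ, p.2 (k + 1) = 0 := by
        intro k
        have := DFunLike.congr_fun hp (k + 1)
        simp [Finsupp.single_apply] at this
        omega
      rw [coeff_gP K hμ _ h1, coeff_gP K hν _ h2]
    rw [Finset.sum_congr rfl hterm]
    symm
    by_cases hn : n = μ 0 + ν 0
    · rw [if_pos hn]
      rw [Finset.sum_eq_single_of_mem
        ((Finsupp.single 0 (μ 0), Finsupp.single 0 (ν 0)) :
          (ℕ →₀ ℕ) × (ℕ →₀ ℕ))]
      · simp
      · rw [Finset.HasAntidiagonal.mem_antidiagonal, ← Finsupp.single_add, hn]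
      · rintro p hp hne
        rw [Finset.HasAntidiagonal.mem_antidiagonal] at hp
        by_cases e1 : p.1 0 = μ 0
        · by_cases e2 : p.2 0 = ν 0
          · exfalso
            apply hne
            have hp1 : p.1 = Finsupp.single 0 (μ 0) := by
              ext k
              cases k with
              | zero => simpa using e1
              | succ m =>
                have := DFunLike.congr_fun hp (m + 1)
                simp [Finsupp.single_apply] at this ⊢
                omega
            have hp2 : p.2 = Finsupp.single 0 (ν 0) := by
              ext k
              cases k with
              | zero => simpa using e2
              | succ m =>
                have := DFunLike.congr_fun hp (m + 1)
                simp [Finsupp.single_apply] at this ⊢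
                omega
            exact Prod.ext hp1 hp2
          · simp [e2]
        · simp [e1]
    · rw [if_neg hn]
      apply Finset.sum_eq_zero
      intro p hp
      rw [Finset.HasAntidiagonal.mem_antidiagonal] at hp
      by_cases e1 : p.1 0 = μ 0
      · by_cases e2 : p.2 0 = ν 0
        · exfalso
          apply hn
          have := DFunLike.congr_fun hp 0
          simp [Finsupp.single_apply] at this
          omega
        · simp [e2]
      · simp [e1]
  -- assemble
  have hsum2 : (∑ᶠ lam : ℕ → ℕ, d lam * t ^ (lam 0))
      = ∑ lam ∈ S, d lam * t ^ (lam 0) := by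
    apply finsum_eq_sum_of_support_subset
    intro lam hlam
    rw [Function.mem_support] at hlam
    rw [Finset.mem_coe, hmemS]
    intro hd
    exact hlam (by rw [hd, zero_mul])
  rw [hsum2]
  set F : Finset ℕ := insert (μ 0 + ν 0) (S.image fun lam => lam 0) with hF
  have hstep : ∀ n ∈ F, (if n = μ 0 + ν 0 then (1 : K) else 0) * t ^ n
      = if n = μ 0 + ν 0 then t ^ n else 0 := by
    intro n _
    by_cases h : n = μ 0 + ν 0 <;> simp [h]
  have hL : t ^ (μ 0 + ν 0)
      = ∑ n ∈ F, (if n = μ 0 + ν 0 then (1 : K) else 0) * t ^ n := by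
    rw [Finset.sum_congr rfl hstep,
      Finset.sum_ite_eq' F (μ 0 + ν 0) (fun n => t ^ n),
      if_pos (Finset.mem_insert_self _ _)]
  rw [hL]
  have : ∀ n ∈ F, (if n = μ 0 + ν 0 then (1 : K) else 0) * t ^ n
      = ∑ lam ∈ S, d lam * (if n = lam 0 then 1 else 0) * t ^ n := by
    intro n _
    rw [key n, Finset.sum_mul]
  rw [Finset.sum_congr rfl this, Finset.sum_comm]
  apply Finset.sum_congr rfl
  intro lam hlam
  have hmem : lam 0 ∈ F := by
    rw [hF]
    exact Finset.mem_insert_of_mem (Finset.mem_image_of_mem _ hlam)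
  have : ∀ n ∈ F, d lam * (if n = lam 0 then (1 : K) else 0) * t ^ n
      = if n = lam 0 then d lam * t ^ n else 0 := by
    intro n _
    by_cases h : n = lam 0 <;> simp [h]
  rw [Finset.sum_congr rfl this, Finset.sum_ite_eq' F (lam 0) (fun n => d lam * t ^ n),
    if_pos hmem]
end
end

section
/- In the incidence algebra of Young's lattice, the element i_t(μ,λ) = t^{c(λ/μ)} has two-sided inverse j_t given by j_t(μ,λ) = (−1)^{|λ/μ|} t^{c(λ/μ)} (t−1)^{|λ/μ|−c(λ/μ)} if λ/μ is a vertical strip and 0 otherwise; i.e., Σ_{μ⊆ν⊆λ} i_t(μ,ν) j_t(ν,λ) = δ_{μλ} for all μ ⊆ λ. -/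
/- Common combinatorial definitions: partitions (as weakly decreasing, eventually
zero functions ℕ → ℕ), skew shapes, cells, and reverse plane partitions. -/

open scoped Classical

noncomputable section

variable (K : Type*) [CommRing K]

/-- `λ/μ` is a vertical strip: at most one box in each row. -/
def VertStrip (μ lam : ℕ → ℕ) : Prop :=
  SubShape μ lam ∧ ∀ i, lam i ≤ μ i + 1

/-- the element `j_t` of the incidence algebra of Young's lattice:
`j_t(μ,λ) = (−1)^{|λ/μ|} t^{c(λ/μ)} (t−1)^{|λ/μ|−c(λ/μ)}` if `λ/μ` is a vertical
strip, and `0` otherwise. -/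
def jt (t : K) (μ lam : ℕ → ℕ) : K :=
  if VertStrip μ lam then
    (-1 : K) ^ skewSize μ lam * t ^ nCols μ lam *
      (t - 1) ^ (skewSize μ lam - nCols μ lam)
  else 0

lemma skewSize_eq_sum (σ τ : ℕ → ℕ) (N : ℕ) (h : ∀ i, N ≤ i → τ i = 0) :
    skewSize σ τ = ∑ i ∈ Finset.range N, (τ i - σ i) := by
  apply finsum_eq_sum_of_support_subset
  intro i hi
  simp only [Function.mem_support] at hi
  simp only [Finset.coe_range, Set.mem_Iio]
  by_contra hc
  exact hi (by rw [h i (by omega)]; omega)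

lemma cols_finite (σ τ : ℕ → ℕ) (hτ : ∀ ⦃i j : ℕ⦄, i ≤ j → τ j ≤ τ i) :
    {j | ∃ i, Cell σ τ i j}.Finite := by
  apply Set.Finite.subset (Set.finite_Iio (τ 0))
  rintro j ⟨i, _, h2⟩
  exact lt_of_lt_of_le h2 (hτ (Nat.zero_le i))

lemma nCols_le_skewSize (σ τ : ℕ → ℕ) (hτ : ∀ ⦃i j : ℕ⦄, i ≤ j → τ j ≤ τ i)
    (hvs : VertStrip σ τ) (N : ℕ) (hN : ∀ i, N ≤ i → τ i = 0) :
    nCols σ τ ≤ skewSize σ τ := by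
  classical
  set C := {j | ∃ i, Cell σ τ i j} with hC
  have hCf : C.Finite := cols_finite σ τ hτ
  set f : ℕ → ℕ := fun j => if h : j ∈ C then Classical.choose h else 0 with hf
  have hcell : ∀ j ∈ C, Cell σ τ (f j) j := by
    intro j hj
    simp only [hf, dif_pos hj]
    exact Classical.choose_spec hj
  have hinj : Set.InjOn f C := by
    intro j1 h1 j2 h2 he
    have c1 := hcell j1 h1
    have c2 := hcell j2 h2
    rw [he] at c1
    have := hvs.2 (f j2)
    obtain ⟨a1, b1⟩ := c1; obtain ⟨a2, b2⟩ := c2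
    omega
  set R : Finset ℕ := (Finset.range N).filter (fun i => σ i < τ i) with hR
  have himg : f '' C ⊆ ↑R := by
    rintro i ⟨j, hj, rfl⟩
    obtain ⟨a, b⟩ := hcell j hj
    simp only [hR, Finset.coe_filter, Finset.mem_range, Set.mem_setOf_eq]
    constructor
    · by_contra hc
      rw [hN _ (by omega)] at b; omega
    · omega
  have h1 : nCols σ τ = (f '' C).ncard := (Set.ncard_image_of_injOn hinj).symm
  have h2 : (f '' C).ncard ≤ R.card := by
    have := Set.ncard_le_ncard himg (Finset.finite_toSet R)
    rwa [Set.ncard_coe_finset] at this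
  have h3 : R.card ≤ ∑ i ∈ Finset.range N, (τ i - σ i) := by
    rw [Finset.card_eq_sum_ones]
    calc ∑ _i ∈ R, 1 ≤ ∑ i ∈ R, (τ i - σ i) := by
            apply Finset.sum_le_sum
            intro i hi
            simp only [hR, Finset.mem_filter] at hi
            omega
      _ ≤ ∑ i ∈ Finset.range N, (τ i - σ i) :=
            Finset.sum_le_sum_of_subset (Finset.filter_subset _ _)
  rw [skewSize_eq_sum σ τ N hN, h1]
  omega


lemma vertStrip_self (σ : ℕ → ℕ) : VertStrip σ σ :=
  ⟨fun _ => le_rfl, fun _ => Nat.le_succ _⟩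

lemma nCols_self (σ : ℕ → ℕ) : nCols σ σ = 0 := by
  unfold nCols
  convert Set.ncard_empty ℕ
  ext j
  simp only [Set.mem_setOf_eq, Set.mem_empty_iff_false, iff_false]
  rintro ⟨i, h1, h2⟩
  omega

lemma skewSize_self (σ : ℕ → ℕ) : skewSize σ σ = 0 := by
  unfold skewSize; simp

lemma jt_self (t : K) (σ : ℕ → ℕ) : jt K t σ σ = 1 := by
  unfold jt
  rw [if_pos (vertStrip_self σ), nCols_self, skewSize_self]
  simp

lemma alg (t : K) : ∀ n : ℕ, 1 ≤ n →
    ∑ k ∈ Finset.range (n+1), (-1:K)^k *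
      t^((if k < n then 1 else 0) + (if 0 < k then 1 else 0)) *
      (t-1)^(k - (if 0 < k then 1 else 0)) = 0 := by
  intro n
  induction n with
  | zero => omega
  | succ n ih =>
    intro _
    rcases Nat.eq_zero_or_pos n with h0 | hn
    · subst h0
      simp [Finset.sum_range_succ]
    · have e1 : ∀ k ∈ Finset.range (n+1), (-1:K)^k *
          t^((if k < n+1 then 1 else 0) + (if 0 < k then 1 else 0)) *
          (t-1)^(k - (if 0 < k then 1 else 0))
        = ((-1:K)^k *
          t^((if k < n then 1 else 0) + (if 0 < k then 1 else 0)) *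
          (t-1)^(k - (if 0 < k then 1 else 0)))
          + (if k = n then ((-1:K)^n * (t^2 - t) * (t-1)^(n-1)) else 0) := by
        intro k hk
        simp only [Finset.mem_range] at hk
        rcases eq_or_ne k n with rfl | hne
        · simp only [if_pos (Nat.lt_succ_self k), if_neg (lt_irrefl k), if_pos hn, if_pos rfl]
          norm_num
          ring
        · have hkn : k < n := by omega
          simp [if_pos hkn, if_pos (show k < n+1 by omega), hne, hkn.le]
      rw [Finset.sum_range_succ, Finset.sum_congr rfl e1, Finset.sum_add_distrib,
        Finset.sum_ite_eq' (Finset.range (n+1)) n, ih hn]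
      simp only [Finset.mem_range, Nat.lt_succ_self, if_pos, lt_irrefl, if_neg,
        Nat.lt_succ_self, Nat.succ_sub_one]
      have h1 : (t-1)^n = (t-1)^(n-1) * (t-1) := by
        conv_lhs => rw [show n = (n-1)+1 by omega, pow_succ]
      norm_num
      rw [h1, pow_succ]
      ring


/-- the `x`-th member of a fiber -/
def stepf (ρ : ℕ → ℕ) (J a x : ℕ) : ℕ → ℕ :=
  fun i => if a ≤ i ∧ i < a + x then J + 1 else ρ i

lemma stepf_props (μ lam ρ : ℕ → ℕ) (J a b : ℕ)
    (hμ : IsPartition μ) (hlam : IsPartition lam)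
    (hab : a < b)
    (hμa : ∀ i, i < a → J < μ i)
    (hμa' : μ a ≤ J)
    (hbJ : ∀ i, b ≤ i → lam i ≤ J)
    (hmid : ∀ i, a ≤ i → i < b → lam i = J + 1)
    (hρ : IsPartition ρ) (hρmid : ∀ i, a ≤ i → i < b → ρ i = J)
    (hμρ : SubShape μ ρ) (hρlam : SubShape ρ lam) (hvs : VertStrip ρ lam) :
    ∀ x, x ≤ b - a → IsPartition (stepf ρ J a x) ∧ SubShape μ (stepf ρ J a x) ∧
      SubShape (stepf ρ J a x) lam ∧ VertStrip (stepf ρ J a x) lam := by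
  set n := b - a with hn
  have hμ_anti := hμ.1
  have hρ_anti := hρ.1
  have hJρ : ∀ i, i < a → J < ρ i := fun i hi => lt_of_lt_of_le (hμa i hi) (hμρ i)
  have hρb : ∀ i, b ≤ i → ρ i ≤ J := fun i hi => le_trans (hρlam i) (hbJ i hi)
  have hμJ : ∀ i, a ≤ i → μ i ≤ J := fun i hi => le_trans (hμ_anti hi) hμa'
  have hms : ∀ x i, stepf ρ J a x i = if a ≤ i ∧ i < a + x then J + 1 else ρ i :=
    fun _ _ => rfl
  intro x hx
  refine ⟨?_, ?_, ?_, ?_⟩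
  · constructor
    · intro i j hij
      rw [hms, hms]
      split
      · next hj =>
        split
        · omega
        · next hi =>
          have : i < a := by omega
          exact le_trans (Nat.succ_le_of_lt (hJρ i this)) le_rfl
      · next hj =>
        split
        · next hi =>
          rcases Nat.lt_or_ge j b with hjb | hjb
          · rw [hρmid j (by omega) hjb]; omega
          · have := hρb j hjb; omega
        · exact hρ_anti hij
    · obtain ⟨Nρ, hNρ⟩ := hρ.2
      exact ⟨max Nρ (a + x), fun i hi => by
        rw [hms, if_neg (by omega), hNρ i (by omega)]⟩
  · intro i
    rw [hms]
    split
    · next h => exact le_trans (hμJ i h.1) (Nat.le_succ J)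
    · exact hμρ i
  · intro i
    rw [hms]
    split
    · next h => exact le_of_eq (hmid i h.1 (by omega)).symm
    · exact hρlam i
  · constructor
    · intro i
      rw [hms]
      split
      · next h => exact le_of_eq (hmid i h.1 (by omega)).symm
      · exact hρlam i
    · intro i
      rw [hms]
      split
      · next h => rw [hmid i h.1 (by omega)]; omega
      · exact hvs.2 i

lemma fiber_sum (t : K) (μ lam ρ : ℕ → ℕ) (J a b : ℕ)
    (hμ : IsPartition μ) (hlam : IsPartition lam)
    (hab : a < b)
    (hμa : ∀ i, i < a → J < μ i)
    (hμa' : μ a ≤ J)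
    (hbJ : ∀ i, b ≤ i → lam i ≤ J)
    (hmid : ∀ i, a ≤ i → i < b → lam i = J + 1)
    (hmax : ∀ i j, Cell μ lam i j → j ≤ J)
    (hρ : IsPartition ρ) (hρmid : ∀ i, a ≤ i → i < b → ρ i = J)
    (hμρ : SubShape μ ρ) (hρlam : SubShape ρ lam) (hvs : VertStrip ρ lam) :
    ∑ x ∈ Finset.range (b - a + 1),
      t ^ nCols μ (stepf ρ J a x) * jt K t (stepf ρ J a x) lam = 0 := by
  set n := b - a with hn
  have hμ_anti := hμ.1
  have hlam_anti := hlam.1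
  have hρ_anti := hρ.1
  obtain ⟨Nl, hNl⟩ := hlam.2
  have hJρ : ∀ i, i < a → J < ρ i := fun i hi => lt_of_lt_of_le (hμa i hi) (hμρ i)
  have hρb : ∀ i, b ≤ i → ρ i ≤ J := fun i hi => le_trans (hρlam i) (hbJ i hi)
  have hμJ : ∀ i, a ≤ i → μ i ≤ J := fun i hi => le_trans (hμ_anti hi) hμa'
  have hms : ∀ x i, stepf ρ J a x i = if a ≤ i ∧ i < a + x then J + 1 else ρ i :=
    fun _ _ => rfl
  -- basic structure of stepf
  have hprops := stepf_props μ lam ρ J a b hμ hlam hab hμa hμa' hbJ hmid hρ hρmid hμρ hρlam hvs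
  have hsub1 : ∀ x, x ≤ n → SubShape μ (stepf ρ J a x) := fun x hx => (hprops x hx).2.1
  have hsub2 : ∀ x, x ≤ n → SubShape (stepf ρ J a x) lam := fun x hx => (hprops x hx).2.2.1
  have hvs2 : ∀ x, x ≤ n → VertStrip (stepf ρ J a x) lam := fun x hx => (hprops x hx).2.2.2
  -- columns of stepf/μ
  have hJnotμρ : J ∉ {j | ∃ i, Cell μ ρ i j} := by
    rintro ⟨i, h1, h2⟩
    rcases Nat.lt_or_ge i a with hia | hia
    · exact absurd h1 (by have := hμa i hia; omega)
    · rcases Nat.lt_or_ge i b with hib | hib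
      · rw [hρmid i hia hib] at h2; omega
      · have := hρb i hib; omega
  have hcols1 : ∀ x, x ≤ n → 0 < x →
      {j | ∃ i, Cell μ (stepf ρ J a x) i j} = insert J {j | ∃ i, Cell μ ρ i j} := by
    intro x hx hx0
    ext j
    simp only [Set.mem_setOf_eq, Set.mem_insert_iff]
    constructor
    · rintro ⟨i, h1, h2⟩
      rcases eq_or_ne j J with rfl | hne
      · exact Or.inl rfl
      · right
        have hjJ : j ≤ J := hmax i j ⟨h1, lt_of_lt_of_le h2 (hsub2 x hx i)⟩
        have hjJ' : j < J := by omega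
        rw [hms] at h2
        by_cases hM : a ≤ i ∧ i < a + x
        · exact ⟨i, h1, by rw [hρmid i hM.1 (by omega)]; omega⟩
        · rw [if_neg hM] at h2; exact ⟨i, h1, h2⟩
    · rintro (rfl | ⟨i, h1, h2⟩)
      · exact ⟨a, hμJ a le_rfl, by rw [hms, if_pos ⟨le_rfl, by omega⟩]; omega⟩
      · refine ⟨i, h1, ?_⟩
        rw [hms]
        split
        · next h => rw [hρmid i h.1 (by omega)] at h2; omega
        · exact h2
  have hncols1 : ∀ x, x ≤ n →
      nCols μ (stepf ρ J a x) = nCols μ ρ + (if 0 < x then 1 else 0) := by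
    intro x hx
    rcases Nat.eq_zero_or_pos x with rfl | hx0
    · simp only [if_neg (lt_irrefl 0), add_zero]
      unfold nCols
      congr 1
      ext j
      simp only [Set.mem_setOf_eq]
      constructor <;> rintro ⟨i, h1, h2⟩ <;> refine ⟨i, h1, ?_⟩
      · rw [hms, if_neg (by omega)] at h2; exact h2
      · rw [hms, if_neg (by omega)]; exact h2
    · rw [if_pos hx0]
      unfold nCols
      rw [hcols1 x hx hx0,
        Set.ncard_insert_of_notMem hJnotμρ (cols_finite μ ρ hρ_anti)]
  -- columns of lam/stepf
  have hJnotρn : J ∉ {j | ∃ i, Cell (stepf ρ J a n) lam i j} := by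
    rintro ⟨i, h1, h2⟩
    rw [hms] at h1
    rcases Nat.lt_or_ge i a with hia | hia
    · rw [if_neg (by omega)] at h1; have := hJρ i hia; omega
    · rcases Nat.lt_or_ge i b with hib | hib
      · rw [if_pos ⟨hia, by omega⟩] at h1; omega
      · have := hbJ i hib; omega
  have hcols2 : ∀ x, x ≤ n → x < n →
      {j | ∃ i, Cell (stepf ρ J a x) lam i j}
        = insert J {j | ∃ i, Cell (stepf ρ J a n) lam i j} := by
    intro x hx hxn
    ext j
    simp only [Set.mem_setOf_eq, Set.mem_insert_iff]
    constructor
    · rintro ⟨i, h1, h2⟩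
      rcases eq_or_ne j J with rfl | hne
      · exact Or.inl rfl
      · right
        have hjJ : j ≤ J := hmax i j ⟨le_trans (hsub1 x hx i) h1, h2⟩
        have hjJ' : j < J := by omega
        rw [hms] at h1
        have hiout : ¬ (a ≤ i ∧ i < b) := by
          rintro ⟨u, v⟩
          by_cases hM : a ≤ i ∧ i < a + x
          · rw [if_pos hM] at h1; omega
          · rw [if_neg hM] at h1; rw [hρmid i u v] at h1; omega
        rw [if_neg (by omega)] at h1
        exact ⟨i, by rw [hms, if_neg (by omega)]; exact h1, h2⟩
    · rintro (rfl | ⟨i, h1, h2⟩)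
      · refine ⟨a + x, ?_, ?_⟩
        · rw [hms, if_neg (by omega), hρmid (a+x) (by omega) (by omega)]
        · rw [hmid (a+x) (by omega) (by omega)]; omega
      · -- j ≠ J? we don't know here; but witness i must be outside [a,b)
        have hjJ : j ≤ J := hmax i j ⟨le_trans (hsub1 n le_rfl i) h1, h2⟩
        rw [hms] at h1
        have hiout : ¬ (a ≤ i ∧ i < b) := by
          rintro ⟨u, v⟩
          rw [if_pos ⟨u, by omega⟩] at h1
          omega
        rw [if_neg (by omega)] at h1
        exact ⟨i, by rw [hms, if_neg (by omega)]; exact h1, h2⟩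
  have hncols2 : ∀ x, x ≤ n →
      nCols (stepf ρ J a x) lam
        = nCols (stepf ρ J a n) lam + (if x < n then 1 else 0) := by
    intro x hx
    rcases eq_or_ne x n with rfl | hne
    · simp
    · rw [if_pos (by omega)]
      unfold nCols
      rw [hcols2 x hx (by omega),
        Set.ncard_insert_of_notMem hJnotρn (cols_finite _ lam hlam_anti)]
  -- skew sizes
  have hskew : ∀ x, x ≤ n →
      skewSize (stepf ρ J a x) lam = skewSize (stepf ρ J a n) lam + (n - x) := by
    intro x hx
    set N := max Nl b with hN
    rw [skewSize_eq_sum _ lam N (fun i hi => hNl i (by omega)),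
        skewSize_eq_sum _ lam N (fun i hi => hNl i (by omega))]
    have hpt : ∀ i ∈ Finset.range N,
        lam i - stepf ρ J a x i
          = (lam i - stepf ρ J a n i) + (if a + x ≤ i ∧ i < b then 1 else 0) := by
      intro i _
      rw [hms, hms]
      rcases Nat.lt_or_ge i a with hia | hia
      · rw [if_neg (by omega), if_neg (by omega), if_neg (by omega)]; omega
      · rcases Nat.lt_or_ge i b with hib | hib
        · have hl := hmid i hia hib
          have hr := hρmid i hia hib
          by_cases hM : i < a + x
          · rw [if_pos ⟨hia, hM⟩, if_pos ⟨hia, by omega⟩, if_neg (by omega)]; omega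
          · rw [if_neg (by omega), if_pos ⟨hia, by omega⟩, if_pos ⟨by omega, hib⟩]
            omega
        · have := hbJ i hib
          rw [if_neg (by omega), if_neg (by omega), if_neg (by omega)]; omega
    rw [Finset.sum_congr rfl hpt, Finset.sum_add_distrib]
    congr 1
    rw [← Finset.sum_filter]
    have hfe : (Finset.range N).filter (fun i => a + x ≤ i ∧ i < b) = Finset.Ico (a+x) b := by
      ext i
      simp only [Finset.mem_filter, Finset.mem_range, Finset.mem_Ico]
      omega
    rw [hfe, Finset.sum_const, smul_eq_mul, mul_one, Nat.card_Ico]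
    omega
  -- final computation
  set c0 := nCols μ ρ with hc0
  set d := nCols (stepf ρ J a n) lam with hd
  set m := skewSize (stepf ρ J a n) lam with hm
  have hdm : d ≤ m := nCols_le_skewSize _ lam hlam_anti (hvs2 n le_rfl) Nl hNl
  have hn1 : 1 ≤ n := by omega
  have hterm : ∀ x ∈ Finset.range (n+1),
      t ^ nCols μ (stepf ρ J a x) * jt K t (stepf ρ J a x) lam
        = (t^(c0+d) * (-1:K)^m * (t-1)^(m-d)) *
          ((-1:K)^(n-x) * t^((if (n-x) < n then 1 else 0) + (if 0 < (n-x) then 1 else 0))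
            * (t-1)^((n-x) - (if 0 < (n-x) then 1 else 0))) := by
    intro x hxx
    have hx : x ≤ n := by simp only [Finset.mem_range] at hxx; omega
    rw [jt, if_pos (hvs2 x hx), hncols1 x hx, hncols2 x hx, hskew x hx]
    have e1 : (n - x < n) = (0 < x) := by simp only [eq_iff_iff]; omega
    have e2 : (0 < n - x) = (x < n) := by simp only [eq_iff_iff]; omega
    simp only [e1, e2]
    by_cases h1 : 0 < x <;> by_cases h2 : x < n <;>
      simp only [if_pos, if_neg, h1, h2, if_true, if_false] <;>
      [rw [show (m + (n - x)) - (d + 1) = (m - d) + ((n - x) - 1) from by omega];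
       rw [show (m + (n - x)) - (d + 0) = (m - d) + ((n - x) - 0) from by omega];
       rw [show (m + (n - x)) - (d + 1) = (m - d) + ((n - x) - 1) from by omega];
       rw [show (m + (n - x)) - (d + 0) = (m - d) + ((n - x) - 0) from by omega]] <;>
      simp only [pow_add] <;> ring
  rw [show b - a + 1 = n + 1 from rfl, Finset.sum_congr rfl hterm, ← Finset.mul_sum]
  have hrefl := Finset.sum_range_reflect (fun k => (-1:K)^k *
      t^((if k < n then 1 else 0) + (if 0 < k then 1 else 0)) *
      (t-1)^(k - (if 0 < k then 1 else 0))) (n+1)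
  simp only [Nat.add_sub_cancel] at hrefl
  rw [hrefl, alg K t n hn1, mul_zero]

lemma interval_finite (μ lam : ℕ → ℕ) (hlam : IsPartition lam) :
    {ν : ℕ → ℕ | IsPartition ν ∧ SubShape μ ν ∧ SubShape ν lam}.Finite := by
  obtain ⟨N, hN⟩ := hlam.2
  set E := {ν : ℕ → ℕ | IsPartition ν ∧ SubShape μ ν ∧ SubShape ν lam} with hE
  set f : (ℕ → ℕ) → (Fin N → Fin (lam 0 + 1)) :=
    fun ν => fun i => ⟨min (ν i) (lam 0), by omega⟩ with hf
  apply Set.Finite.of_finite_image (f := f)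
  · exact Set.Finite.subset Set.finite_univ (Set.subset_univ _)
  · intro ν₁ h₁ ν₂ h₂ he
    obtain ⟨hp₁, _, hl₁⟩ := h₁
    obtain ⟨hp₂, _, hl₂⟩ := h₂
    funext i
    rcases Nat.lt_or_ge i N with hiN | hiN
    · have := congrFun he ⟨i, hiN⟩
      simp only [hf, Fin.mk.injEq] at this
      have b₁ : ν₁ i ≤ lam 0 := le_trans (hl₁ i) (hlam.1 (Nat.zero_le i))
      have b₂ : ν₂ i ≤ lam 0 := le_trans (hl₂ i) (hlam.1 (Nat.zero_le i))
      omega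
    · have z₁ : ν₁ i = 0 := Nat.le_antisymm (by rw [← hN i hiN]; exact hl₁ i) (Nat.zero_le _)
      have z₂ : ν₂ i = 0 := Nat.le_antisymm (by rw [← hN i hiN]; exact hl₂ i) (Nat.zero_le _)
      rw [z₁, z₂]


lemma first_identity (t : K) (μ lam : ℕ → ℕ)
    (hμ : IsPartition μ) (hlam : IsPartition lam) (hsub : SubShape μ lam) :
    (∑ᶠ ν : ℕ → ℕ,
        if IsPartition ν ∧ SubShape μ ν ∧ SubShape ν lam then
          t ^ nCols μ ν * jt K t ν lam
        else 0) = (if μ = lam then (1 : K) else 0) := by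
  rcases eq_or_ne μ lam with rfl | hne
  · rw [if_pos rfl]
    rw [finsum_eq_single _ μ ?_]
    · rw [if_pos ⟨hμ, fun i => le_rfl, fun i => le_rfl⟩, nCols_self, jt_self, pow_zero, one_mul]
    · intro ν hν
      rw [if_neg]
      rintro ⟨_, h1, h2⟩
      exact hν (funext fun i => Nat.le_antisymm (h2 i) (h1 i))
  · rw [if_neg hne]
    -- the maximal nonempty column J of lam/μ
    set C := {j | ∃ i, Cell μ lam i j} with hC
    have hCfin : C.Finite := cols_finite μ lam hlam.1
    have hCne : C.Nonempty := by
      have : ∃ i, μ i < lam i := by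
        by_contra hc
        push_neg at hc
        exact hne (funext fun i => Nat.le_antisymm (hsub i) (hc i))
      obtain ⟨i, hi⟩ := this
      exact ⟨μ i, i, le_rfl, hi⟩
    have hCbdd : BddAbove C := hCfin.bddAbove
    set J := sSup C with hJ
    have hJmem : J ∈ C := Nat.sSup_mem hCne hCbdd
    have hmax : ∀ i j, Cell μ lam i j → j ≤ J := fun i j h => le_csSup hCbdd ⟨i, h⟩
    -- the row interval [a, b)
    have hane : {i | μ i ≤ J}.Nonempty := by
      obtain ⟨N, hN⟩ := hμ.2
      exact ⟨N, by simp [hN N le_rfl]⟩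
    have hbne : {i | lam i ≤ J}.Nonempty := by
      obtain ⟨N, hN⟩ := hlam.2
      exact ⟨N, by simp [hN N le_rfl]⟩
    set a := sInf {i | μ i ≤ J} with ha
    set b := sInf {i | lam i ≤ J} with hb
    have hμa' : μ a ≤ J := Nat.sInf_mem hane
    have hμa : ∀ i, i < a → J < μ i := by
      intro i hi
      have := Nat.notMem_of_lt_sInf (by rw [← ha]; exact hi)
      simp only [Set.mem_setOf_eq] at this
      omega
    have hlamb : lam b ≤ J := Nat.sInf_mem hbne
    have hbJ : ∀ i, b ≤ i → lam i ≤ J := fun i hi => le_trans (hlam.1 hi) hlamb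
    have hblt : ∀ i, i < b → J < lam i := by
      intro i hi
      have := Nat.notMem_of_lt_sInf (by rw [← hb]; exact hi)
      simp only [Set.mem_setOf_eq] at this
      omega
    have hab : a < b := by
      obtain ⟨i₀, h1, h2⟩ := hJmem
      have hi₀a : a ≤ i₀ := Nat.sInf_le h1
      have hi₀b : i₀ < b := by
        by_contra hc
        have := hbJ i₀ (by omega)
        omega
      omega
    have hμJ : ∀ i, a ≤ i → μ i ≤ J := fun i hi => le_trans (hμ.1 hi) hμa'
    have hmid : ∀ i, a ≤ i → i < b → lam i = J + 1 := by
      intro i h1 h2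
      have hgt : J < lam i := hblt i h2
      have hμi := hμJ i h1
      by_contra hc
      have hmem : J + 1 ∈ C := ⟨i, by omega, by omega⟩
      have := le_csSup hCbdd hmem
      omega
    set n := b - a with hn
    -- convert the finsum to a finite sum
    have hEfin := interval_finite μ lam hlam
    set F := hEfin.toFinset with hF
    have hsupp : (Function.support (fun ν => if IsPartition ν ∧ SubShape μ ν ∧ SubShape ν lam then
          t ^ nCols μ ν * jt K t ν lam else 0)) ⊆ ↑F := by
      intro ν hν
      simp only [Function.mem_support] at hν
      simp only [hF, Set.Finite.coe_toFinset]
      by_contra hc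
      exact hν (if_neg hc)
    rw [finsum_eq_sum_of_support_subset _ hsupp]
    have hFmem : ∀ ν, ν ∈ F ↔ (IsPartition ν ∧ SubShape μ ν ∧ SubShape ν lam) := by
      intro ν
      simp [hF, Set.Finite.mem_toFinset]
    rw [Finset.sum_congr rfl (fun ν hν => if_pos ((hFmem ν).1 hν))]
    -- restrict to vertical strips
    set G := F.filter (fun ν => VertStrip ν lam) with hG
    have hzero : ∀ ν ∈ F, ν ∉ G → t ^ nCols μ ν * jt K t ν lam = 0 := by
      intro ν hν hν2
      have hnvs : ¬ VertStrip ν lam := by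
        intro hc
        exact hν2 (Finset.mem_filter.2 ⟨hν, hc⟩)
      rw [jt, if_neg hnvs, mul_zero]
    rw [← Finset.sum_subset (Finset.filter_subset _ F) hzero]
    -- fiberwise summation
    set β : (ℕ → ℕ) → (ℕ → ℕ) := fun ν i => if a ≤ i ∧ i < b then J else ν i with hβ
    rw [← Finset.sum_fiberwise_of_maps_to
      (fun ν hν => Finset.mem_image_of_mem β hν) (g := β) (t := G.image β)]
    apply Finset.sum_eq_zero
    intro ρ hρP
    obtain ⟨ν₀, hν₀G, hβν₀⟩ := Finset.mem_image.1 hρP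
    have hν₀ : IsPartition ν₀ ∧ SubShape μ ν₀ ∧ SubShape ν₀ lam := by
      rw [← hFmem]; exact (Finset.mem_filter.1 hν₀G).1
    have hν₀vs : VertStrip ν₀ lam := (Finset.mem_filter.1 hν₀G).2
    -- properties of the fiber base ρ
    have hρval : ∀ i, ρ i = if a ≤ i ∧ i < b then J else ν₀ i := fun i => by
      rw [← hβν₀]
    have hρmid : ∀ i, a ≤ i → i < b → ρ i = J := by
      intro i h1 h2; rw [hρval, if_pos ⟨h1, h2⟩]
    have hρout : ∀ i, ¬(a ≤ i ∧ i < b) → ρ i = ν₀ i := by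
      intro i h; rw [hρval, if_neg h]
    have hν₀a : ∀ i, i < a → J < ν₀ i := fun i hi => lt_of_lt_of_le (hμa i hi) (hν₀.2.1 i)
    have hν₀b : ∀ i, b ≤ i → ν₀ i ≤ J := fun i hi => le_trans (hν₀.2.2 i) (hbJ i hi)
    have hρpart : IsPartition ρ := by
      constructor
      · intro i j hij
        rw [hρval, hρval]
        split
        · next hj =>
          split
          · omega
          · next hi =>
            have hia : i < a := by omega
            have := hν₀a i hia; omega
        · next hj =>
          split
          · next hi =>
            have hjb : b ≤ j := by omega
            have := hν₀b j hjb; omega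
          · exact hν₀.1.1 hij
      · obtain ⟨N, hN⟩ := hν₀.1.2
        refine ⟨max N b, fun i hi => ?_⟩
        rw [hρval, if_neg (by omega), hN i (by omega)]
      
    have hμρ : SubShape μ ρ := by
      intro i
      rw [hρval]
      split
      · next h => exact hμJ i h.1
      · exact hν₀.2.1 i
    have hρlam : SubShape ρ lam := by
      intro i
      rw [hρval]
      split
      · next h => rw [hmid i h.1 h.2]; omega
      · exact hν₀.2.2 i
    have hρvs : VertStrip ρ lam := by
      refine ⟨hρlam, fun i => ?_⟩
      rw [hρval]
      split
      · next h => rw [hmid i h.1 h.2]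
      · exact hν₀vs.2 i
    -- the fiber is the image of stepf
    have hprops := stepf_props μ lam ρ J a b hμ hlam hab hμa hμa' hbJ hmid
      hρpart hρmid hμρ hρlam hρvs
    have hfib : G.filter (fun ν => β ν = ρ)
        = (Finset.range (n + 1)).image (fun x => stepf ρ J a x) := by
      ext ν
      simp only [Finset.mem_filter, Finset.mem_image, Finset.mem_range]
      constructor
      · rintro ⟨hνG, hβν⟩
        obtain ⟨hνF, hνvs⟩ := Finset.mem_filter.1 hνG
        have hν : IsPartition ν ∧ SubShape μ ν ∧ SubShape ν lam := (hFmem ν).1 hνF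
        have hνb : ν b ≤ J := le_trans (hν.2.2 b) hlamb
        set e := sInf {i | ν i ≤ J} with he
        have hene : {i | ν i ≤ J}.Nonempty := ⟨b, hνb⟩
        have hee : ν e ≤ J := Nat.sInf_mem hene
        have helt : ∀ i, i < e → J < ν i := by
          intro i hi
          have := Nat.notMem_of_lt_sInf (by rw [← he]; exact hi)
          simp only [Set.mem_setOf_eq] at this
          omega
        have hea : a ≤ e := by
          by_contra hc
          have := hμa e (by omega)
          have := hν.2.1 e
          omega
        have heb : e ≤ b := Nat.sInf_le hνb
        refine ⟨e - a, by omega, ?_⟩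
        funext i
        show (if a ≤ i ∧ i < a + (e - a) then J + 1 else ρ i) = ν i
        rw [show a + (e - a) = e from by omega]
        split
        · next h =>
          have hib : i < b := by omega
          have h1 := helt i h.2
          have h2 : ν i ≤ lam i := hν.2.2 i
          rw [hmid i h.1 hib] at h2
          omega
        · next h =>
          by_cases hi2 : a ≤ i ∧ i < b
          · rw [hρmid i hi2.1 hi2.2]
            have h1 : ν i ≤ ν e := hν.1.1 (by omega)
            have h2 := hνvs.2 i
            rw [hmid i hi2.1 hi2.2] at h2
            omega
          · rw [← hβν]
            show (if a ≤ i ∧ i < b then J else ν i) = ν i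
            rw [if_neg hi2]
      · rintro ⟨x, hx, rfl⟩
        have hx' : x ≤ n := by omega
        obtain ⟨p1, p2, p3, p4⟩ := hprops x hx'
        constructor
        · rw [Finset.mem_filter, hFmem]
          exact ⟨⟨p1, p2, p3⟩, p4⟩
        · funext i
          show (if a ≤ i ∧ i < b then J
            else (if a ≤ i ∧ i < a + x then J + 1 else ρ i)) = ρ i
          split
          · next h => rw [hρmid i h.1 h.2]
          · next h => rw [if_neg (by omega)]
    rw [hfib, Finset.sum_image ?_]
    · exact fiber_sum K t μ lam ρ J a b hμ hlam hab hμa hμa' hbJ hmid hmax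
        hρpart hρmid hμρ hρlam hρvs
    · have key : ∀ x y, x < y → y < n + 1 → stepf ρ J a x ≠ stepf ρ J a y := by
        intro x y hlt hy hxy
        have hcf := congrFun hxy (a + x)
        simp only [stepf] at hcf
        rw [if_neg (by omega), if_pos ⟨by omega, by omega⟩,
          hρmid (a+x) (by omega) (by omega)] at hcf
        omega
      intro x hx y hy hxy
      simp only [Finset.coe_range, Set.mem_Iio, Finset.mem_coe, Finset.mem_range] at hx hy
      rcases lt_trichotomy x y with h | h | h
      · exact absurd hxy (key x y h hy)
      · exact h
      · exact absurd hxy.symm (key y x h hx)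


/-- In the incidence algebra of Young's lattice, the element
`i_t(μ,λ) = t^{c(λ/μ)}` has two-sided convolution inverse `j_t`:
`Σ_{μ⊆ν⊆λ} i_t(μ,ν) j_t(ν,λ) = δ_{μλ} = Σ_{μ⊆ν⊆λ} j_t(μ,ν) i_t(ν,λ)`. -/
theorem incidence_inverse (t : K) (μ lam : ℕ → ℕ)
    (hμ : IsPartition μ) (hlam : IsPartition lam) (hsub : SubShape μ lam) :
    (∑ᶠ ν : ℕ → ℕ,
        if IsPartition ν ∧ SubShape μ ν ∧ SubShape ν lam then
          t ^ nCols μ ν * jt K t ν lam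
        else 0) = (if μ = lam then (1 : K) else 0) ∧
    (∑ᶠ ν : ℕ → ℕ,
        if IsPartition ν ∧ SubShape μ ν ∧ SubShape ν lam then
          jt K t μ ν * t ^ nCols ν lam
        else 0) = (if μ = lam then (1 : K) else 0) := by
  refine ⟨first_identity K t μ lam hμ hlam hsub, ?_⟩
  -- set up the incidence matrices over the finite interval [μ, lam]
  have hEfin := interval_finite μ lam hlam
  set I := hEfin.toFinset with hI
  have hImem : ∀ ν, ν ∈ I ↔ (IsPartition ν ∧ SubShape μ ν ∧ SubShape ν lam) := by
    intro ν; simp [hI, Set.Finite.mem_toFinset]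
  set A : Matrix I I K := fun ρ σ =>
    if SubShape ρ.1 σ.1 then t ^ nCols ρ.1 σ.1 else 0 with hA
  set B : Matrix I I K := fun ρ σ => jt K t ρ.1 σ.1 with hB
  have hAB : A * B = 1 := by
    ext ρ σ
    rw [Matrix.mul_apply, Matrix.one_apply]
    obtain ⟨hρp, hρ1, hρ2⟩ := (hImem ρ.1).1 ρ.2
    obtain ⟨hσp, hσ1, hσ2⟩ := (hImem σ.1).1 σ.2
    by_cases hρσ : SubShape ρ.1 σ.1
    · have h1 := first_identity K t ρ.1 σ.1 hρp hσp hρσ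
      have hsupp : (Function.support (fun ν => if IsPartition ν ∧ SubShape ρ.1 ν ∧ SubShape ν σ.1
          then t ^ nCols ρ.1 ν * jt K t ν σ.1 else 0)) ⊆ ↑I := by
        intro ν hν
        simp only [Function.mem_support] at hν
        by_contra hc
        refine hν (if_neg ?_)
        rintro ⟨u1, u2, u3⟩
        exact hc (by
          rw [Finset.mem_coe, hImem]
          exact ⟨u1, fun i => le_trans (hρ1 i) (u2 i), fun i => le_trans (u3 i) (hσ2 i)⟩)
      rw [finsum_eq_sum_of_support_subset _ hsupp, ← Finset.sum_coe_sort] at h1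
      have hterm : ∀ ν : I, A ρ ν * B ν σ
          = (if IsPartition ν.1 ∧ SubShape ρ.1 ν.1 ∧ SubShape ν.1 σ.1
              then t ^ nCols ρ.1 ν.1 * jt K t ν.1 σ.1 else 0) := by
        intro ν
        obtain ⟨hνp, _, _⟩ := (hImem ν.1).1 ν.2
        simp only [hA, hB]
        by_cases h2 : SubShape ρ.1 ν.1
        · by_cases h3 : SubShape ν.1 σ.1
          · rw [if_pos h2, if_pos ⟨hνp, h2, h3⟩]
          · have hg : ¬(IsPartition ν.1 ∧ SubShape ρ.1 ν.1 ∧ SubShape ν.1 σ.1) :=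
              fun hg => h3 hg.2.2
            have hjt : jt K t ν.1 σ.1 = 0 := by
              rw [jt, if_neg (fun hvs : VertStrip ν.1 σ.1 => h3 hvs.1)]
            rw [hjt, mul_zero, if_neg hg]
        · rw [if_neg h2, if_neg (fun hg => h2 hg.2.1), zero_mul]
      rw [Finset.sum_congr rfl (fun ν _ => hterm ν), h1]
      by_cases he : ρ.1 = σ.1
      · rw [if_pos he, if_pos (Subtype.ext he)]
      · rw [if_neg he, if_neg (fun hc => he (congrArg Subtype.val hc))]
    · rw [if_neg (fun hc : ρ = σ => hρσ (by rw [hc]; exact fun i => le_rfl))]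
      apply Finset.sum_eq_zero
      intro ν _
      simp only [hA, hB]
      by_cases h2 : SubShape ρ.1 ν.1
      · by_cases h3 : VertStrip ν.1 σ.1
        · exact absurd (fun i => le_trans (h2 i) (h3.1 i)) hρσ
        · rw [jt, if_neg h3, mul_zero]
      · rw [if_neg h2, zero_mul]
  have hBA : B * A = 1 := mul_eq_one_comm.mp hAB
  -- extract the (μ, lam) entry
  have hμI : μ ∈ I := (hImem μ).2 ⟨hμ, fun i => le_rfl, hsub⟩
  have hlamI : lam ∈ I := (hImem lam).2 ⟨hlam, hsub, fun i => le_rfl⟩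
  have hent := congrFun (congrFun hBA ⟨μ, hμI⟩) ⟨lam, hlamI⟩
  rw [Matrix.mul_apply, Matrix.one_apply] at hent
  have hsupp2 : (Function.support (fun ν => if IsPartition ν ∧ SubShape μ ν ∧ SubShape ν lam
      then jt K t μ ν * t ^ nCols ν lam else 0)) ⊆ ↑I := by
    intro ν hν
    simp only [Function.mem_support] at hν
    by_contra hc
    exact hν (if_neg (fun hg => hc (by rw [Finset.mem_coe, hImem]; exact hg)))
  rw [finsum_eq_sum_of_support_subset _ hsupp2, ← Finset.sum_coe_sort]
  have hterm2 : ∀ ν : I, (if IsPartition ν.1 ∧ SubShape μ ν.1 ∧ SubShape ν.1 lam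
      then jt K t μ ν.1 * t ^ nCols ν.1 lam else 0)
      = B ⟨μ, hμI⟩ ν * A ν ⟨lam, hlamI⟩ := by
    intro ν
    obtain ⟨hνp, hν1, hν2⟩ := (hImem ν.1).1 ν.2
    simp only [hA, hB]
    rw [if_pos ⟨hνp, hν1, hν2⟩, if_pos hν2]
  rw [Finset.sum_congr rfl (fun ν _ => hterm2 ν), hent]
  by_cases he : μ = lam
  · rw [if_pos (Subtype.ext he), if_pos he]
  · rw [if_neg he, if_neg (fun hc => he (congrArg Subtype.val hc))]
end
end
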